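/- Every pure imaginary real quaternion of norm 1 is of the form q⁻¹ · i · q for some nonzero quaternion q; i.e. the Hopf map q ↦ q⁻¹ i q maps the nonzero quaternions onto the entire unit sphere of pure imaginary quaternions. -/

import Mathlib

/-- The quaternion `i`, with components `(0,1,0,0)`. -/
def qi : Quaternion ℝ := ⟨0, 1, 0, 0⟩

private def qj : Quaternion ℝ := ⟨0, 0, 1, 0⟩

/-- every pure imaginary quaternion of norm `1` is of the form
`q⁻¹·i·q` for some nonzero quaternion `q`: the Hopf map is onto the unit sphere
of pure imaginary quaternions. -/
theorem stmt8 (x : Quaternion ℝ) (hre : x.re = 0) (hnorm : ‖x‖ = 1) :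
    ∃ q : Quaternion ℝ, q ≠ 0 ∧ q⁻¹ * qi * q = x := by
  have hns : Quaternion.normSq x = 1 := by
    rw [Quaternion.normSq_eq_norm_mul_self, hnorm]; ring
  have hsum : x.imI ^ 2 + x.imJ ^ 2 + x.imK ^ 2 = 1 := by
    have := Quaternion.normSq_def' x
    rw [hns] at this
    change 1 = x.re ^ 2 + x.imI ^ 2 + x.imJ ^ 2 + x.imK ^ 2 at this
    nlinarith [this, hre]
  have hsq : x * x = -1 := by
    ext <;>
      simp [Quaternion.re_mul, Quaternion.imI_mul, Quaternion.imJ_mul, Quaternion.imK_mul, Quaternion.re_one, Quaternion.imI_one, Quaternion.imJ_one, Quaternion.imK_one, hre] <;>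
      nlinarith [hsum]
  by_cases hx : qi + x = 0
  · -- x = -qi; use q = j
    have hxi : x = -qi := eq_neg_of_add_eq_zero_right hx
    have hj : qj ≠ 0 := by
      intro h
      have := congrArg QuaternionAlgebra.imJ h
      simp [qj, Quaternion.imJ_zero] at this
    have hjinv : qj⁻¹ = -qj := by
      apply inv_eq_of_mul_eq_one_right
      ext <;> simp [Quaternion.re_mul, Quaternion.imI_mul, Quaternion.imJ_mul, Quaternion.imK_mul, Quaternion.re_one, Quaternion.imI_one, Quaternion.imJ_one, Quaternion.imK_one] <;> simp [qj]
    refine ⟨qj, hj, ?_⟩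
    rw [hxi, hjinv]
    ext <;> simp [Quaternion.re_mul, Quaternion.imI_mul, Quaternion.imJ_mul, Quaternion.imK_mul, Quaternion.re_one, Quaternion.imI_one, Quaternion.imJ_one, Quaternion.imK_one] <;> simp [qi, qj]
  · refine ⟨qi + x, hx, ?_⟩
    have hqisq : qi * qi = -1 := by
      ext <;> simp [Quaternion.re_mul, Quaternion.imI_mul, Quaternion.imJ_mul,
        Quaternion.imK_mul, Quaternion.re_one, Quaternion.imI_one, Quaternion.imJ_one, Quaternion.imK_one] <;> simp [qi, qj]
    have key : qi * (qi + x) = (qi + x) * x := by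
      rw [mul_add, add_mul, hqisq, hsq, add_comm]
    rw [mul_assoc, inv_mul_eq_iff_eq_mul₀ hx, ← key]
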